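/- Terminating Pfaff transformation: for all natural n, complex b, c, x with x ≠ 1 and (c)_k ≠ 0 for 0 ≤ k ≤ n, one has ∑_{k=0}^{n} ((-n)_k (b)_k)/(k! (c)_k) x^k = (1-x)^n · ∑_{k=0}^{n} ((-n)_k (c-b)_k)/(k! (c)_k) (x/(x-1))^k. -/

import Mathlib

noncomputable def poch (z : ℂ) (k : ℕ) : ℂ := ∏ j ∈ Finset.range k, (z + j)

lemma poch_zero (z : ℂ) : poch z 0 = 1 := by simp [poch]

lemma poch_succ (z : ℂ) (k : ℕ) : poch z (k+1) = poch z k * (z + k) := by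
  simp [poch, Finset.prod_range_succ]

lemma poch_succ_left (z : ℂ) (k : ℕ) : poch z (k+1) = z * poch (z+1) k := by
  rw [poch, Finset.prod_range_succ', mul_comm]
  congr 1
  · push_cast; ring
  · apply Finset.prod_congr rfl
    intro j _
    push_cast
    ring

lemma poch_neg_nat (n : ℕ) : poch (-(n:ℂ)) (n+1) = 0 := by
  apply Finset.prod_eq_zero (Finset.self_mem_range_succ n)
  simp

lemma poch_neg_sub (n k : ℕ) :
    poch (-(n:ℂ) - 1) (k+1) = poch (-(n:ℂ)) (k+1) - ((k:ℂ)+1) * poch (-(n:ℂ)) k := by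
  rw [show poch (-(n:ℂ)-1) (k+1) = (-(n:ℂ)-1) * poch (-(n:ℂ)) k by
    rw [poch_succ_left, show (-(n:ℂ)-1+1) = -(n:ℂ) by ring]]
  rw [poch_succ]
  ring

noncomputable def S (n : ℕ) (a c x : ℂ) : ℂ :=
  ∑ k ∈ Finset.range (n + 1),
    poch (-(n : ℂ)) k * poch a k / ((k.factorial : ℂ) * poch c k) * x ^ k

/-- Contiguous relation lowering n. -/
lemma stepA (n : ℕ) (a c x : ℂ) :
    S (n+1) a c x = S n a c x - x * a / c * S n (a+1) (c+1) x := by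
  unfold S
  have hcast : -((n+1 : ℕ) : ℂ) = -(n:ℂ) - 1 := by push_cast; ring
  rw [hcast]
  have hext : ∑ k ∈ Finset.range (n+1),
      poch (-(n : ℂ)) k * poch a k / ((k.factorial : ℂ) * poch c k) * x ^ k
      = ∑ k ∈ Finset.range (n+2),
      poch (-(n : ℂ)) k * poch a k / ((k.factorial : ℂ) * poch c k) * x ^ k := by
    rw [Finset.sum_range_succ (n := n+1), poch_neg_nat]
    simp
  rw [hext, Finset.mul_sum,
    Finset.sum_range_succ' _ (n+1), Finset.sum_range_succ' _ (n+1),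
    add_sub_right_comm, ← Finset.sum_sub_distrib]
  congr 1
  refine Finset.sum_congr rfl fun k _ => ?_
  have hk1 : ((k:ℂ)+1) ≠ 0 := by
    exact_mod_cast Nat.cast_add_one_ne_zero (R := ℂ) k
  rw [poch_neg_sub, sub_mul, sub_div, sub_mul]
  congr 1
  rw [poch_succ_left a, poch_succ_left c, Nat.factorial_succ]
  push_cast
  rw [show ((k:ℂ)+1) * poch (-(n:ℂ)) k * (a * poch (a+1) k)
      = ((k:ℂ)+1) * (poch (-(n:ℂ)) k * (a * poch (a+1) k)) by ring,
    show ((k:ℂ)+1) * (k.factorial : ℂ) * (c * poch (c+1) k)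
      = ((k:ℂ)+1) * ((k.factorial : ℂ) * (c * poch (c+1) k)) by ring,
    mul_div_mul_left _ _ hk1]
  rw [div_eq_mul_inv, div_eq_mul_inv, div_eq_mul_inv, mul_inv, mul_inv, mul_inv]
  ring

/-- Gauss contiguous relation in the denominator parameter. -/
lemma stepB (n : ℕ) (a c y : ℂ) (h1 : ∀ k ≤ n, poch c k ≠ 0)
    (h2 : ∀ k ≤ n, poch (c+1) k ≠ 0) :
    c * S n a c y = (c - a) * S n a (c+1) y + a * S n (a+1) (c+1) y := by
  unfold S
  rw [Finset.mul_sum, Finset.mul_sum, Finset.mul_sum, ← Finset.sum_add_distrib]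
  refine Finset.sum_congr rfl fun k hk => ?_
  have hkn : k ≤ n := by
    have := Finset.mem_range.mp hk; omega
  have hpc : poch c k ≠ 0 := h1 k hkn
  have hpc1 : poch (c+1) k ≠ 0 := h2 k hkn
  have e1 : poch a k * (a + k) = a * poch (a+1) k := by
    rw [← poch_succ, ← poch_succ_left]
  have e2 : poch c k * (c + k) = c * poch (c+1) k := by
    rw [← poch_succ, ← poch_succ_left]
  have key : c * (poch a k / poch c k)
      = (c - a) * (poch a k / poch (c+1) k) + a * (poch (a+1) k / poch (c+1) k) := by
    rw [show (c - a) * (poch a k / poch (c+1) k) + a * (poch (a+1) k / poch (c+1) k)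
        = ((c - a) * poch a k + a * poch (a+1) k) / poch (c+1) k by ring,
      mul_div_assoc' c, div_eq_div_iff hpc hpc1]
    linear_combination (-(poch a k)) * e2 + poch c k * e1
  calc c * (poch (-(n:ℂ)) k * poch a k / ((k.factorial : ℂ) * poch c k) * y ^ k)
      = (poch (-(n:ℂ)) k * y ^ k / (k.factorial : ℂ)) * (c * (poch a k / poch c k)) := by
        rw [div_eq_mul_inv, div_eq_mul_inv, mul_inv]; ring
    _ = _ := by
        rw [key]
        simp only [div_eq_mul_inv, mul_inv]
        ring

lemma pfaff_aux : ∀ n : ℕ, ∀ b c x : ℂ, x ≠ 1 → (∀ k ≤ n, poch c k ≠ 0) →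
    S n b c x = (1 - x) ^ n * S n (c - b) c (x / (x - 1)) := by
  intro n
  induction n with
  | zero =>
      intro b c x hx hc
      simp [S, poch_zero]
  | succ n IH =>
      intro b c x hx hc
      have hcne : c ≠ 0 := by
        have h := hc 1 (by omega)
        simpa [poch_succ_left, poch_zero] using h
      have hc' : ∀ k ≤ n, poch c k ≠ 0 := fun k hk => hc k (by omega)
      have hc1 : ∀ k ≤ n, poch (c+1) k ≠ 0 := by
        intro k hk
        have h := hc (k+1) (by omega)
        rw [poch_succ_left] at h
        exact (mul_ne_zero_iff.mp h).2
      have hx1 : x - 1 ≠ 0 := sub_ne_zero.mpr hx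
      set y := x / (x - 1) with hy
      have hxy : (1 - x) * y = -x := by
        rw [hy]; field_simp; ring
      rw [stepA n b c x, IH b c x hx hc', IH (b+1) (c+1) x hx hc1,
        show c + 1 - (b + 1) = c - b by ring,
        stepA n (c-b) c y]
      have hB : c * S n (c-b) c y
          = b * S n (c-b) (c+1) y + (c-b) * S n (c-b+1) (c+1) y := by
        have := stepB n (c-b) c y hc' hc1
        rw [show c - (c - b) = b by ring] at this
        exact this
      set S1 := S n (c-b) c y
      set A := S n (c-b) (c+1) y
      set B := S n (c-b+1) (c+1) y
      have hB' : x * S1 = x * (b/c) * A + x * ((c-b)/c) * B := by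
        field_simp
        linear_combination x * hB
      rw [pow_succ]
      linear_combination (1-x)^n * hB' + (1-x)^n * ((c-b)/c) * B * hxy

/-- Terminating Pfaff transformation. -/
theorem pfaff_transformation (n : ℕ) (b c x : ℂ) (hx : x ≠ 1)
    (hc : ∀ k : ℕ, k ≤ n → poch c k ≠ 0) :
    ∑ k ∈ Finset.range (n + 1),
        poch (-(n : ℂ)) k * poch b k / ((k.factorial : ℂ) * poch c k) * x ^ k
      = (1 - x) ^ n *
          ∑ k ∈ Finset.range (n + 1),
            poch (-(n : ℂ)) k * poch (c - b) k / ((k.factorial : ℂ) * poch c k)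
              * (x / (x - 1)) ^ k := by
  exact pfaff_aux n b c x hx hc
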